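/- For every real α with 0 < α ≤ 1, the infimum of 2(a+b+c+f)+(d+e) over all general configurations (a,b,c,d,e,f) for α equals the minimum of the following two quantities: (i) the infimum of 2(a+b+c)+d over all kissing-rectangles configurations (a,b,c,d) for α, and (ii) the infimum of a+b+2(c+d) over all embedded-rectangle configurations (a,b,c,d) for α. -/

import Mathlib

/-- A general configuration for `α` (Figure 3 of the paper): a rectangle `a × b`
together with an L-shaped region described by `c, d, e, f`, the two regions having
areas `1` and `α` in either order. -/
def IsGeneralConfig (α a b c d e f : ℝ) : Prop :=
  0 < a ∧ 0 < b ∧ 0 ≤ c ∧ 0 ≤ d ∧ 0 ≤ e ∧ 0 ≤ f ∧ d ≤ b ∧ e ≤ a ∧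
    ((a * b = 1 ∧ c * d + c * f + e * f = α) ∨
      (a * b = α ∧ c * d + c * f + e * f = 1))

/-- A kissing-rectangles configuration for `α`. -/
def IsKissingConfig (α a b c d : ℝ) : Prop :=
  0 < a ∧ 0 < b ∧ 0 < c ∧ 0 < d ∧ d ≤ b ∧
    ((a * b = 1 ∧ c * d = α) ∨ (a * b = α ∧ c * d = 1))

/-- An embedded-rectangle configuration for `α`. -/
def IsEmbeddedConfig (α a b c d : ℝ) : Prop :=
  0 < a ∧ 0 < b ∧ 0 < c ∧ 0 < d ∧ a ≤ c ∧ b ≤ d ∧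
    c * d = 1 + α ∧ (a * b = α ∨ a * b = 1)

set_option maxHeartbeats 2000000 in
/-- Key reduction: every general configuration is beaten by a kissing or an
embedded configuration. -/
lemma general_reduction (α a b c d e f : ℝ) (h0 : 0 < α)
    (h : IsGeneralConfig α a b c d e f) :
    (∃ a' b' c' d' : ℝ, IsKissingConfig α a' b' c' d' ∧
      2 * (a' + b' + c') + d' ≤ 2 * (a + b + c + f) + (d + e)) ∨
    (∃ a' b' c' d' : ℝ, IsEmbeddedConfig α a' b' c' d' ∧
      a' + b' + 2 * (c' + d') ≤ 2 * (a + b + c + f) + (d + e)) := by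
  obtain ⟨ha, hb, hc, hd, he, hf, hdb, hea, harea⟩ := h
  have hS : 0 < c * d + c * f + e * f := by
    rcases harea with ⟨_, h2⟩ | ⟨_, h2⟩ <;> rw [h2] <;> linarith
  -- helpers producing kissing configs in the two orientations
  have mkK : ∀ x y u v : ℝ, 0 < x → 0 < y → 0 < u → 0 < v → v ≤ y →
      x * y = a * b → u * v = c * d + c * f + e * f → IsKissingConfig α x y u v := by
    intro x y u v hx hy hu hv hvy e1 e2
    refine ⟨hx, hy, hu, hv, hvy, ?_⟩
    rcases harea with ⟨h1, h2⟩ | ⟨h1, h2⟩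
    · exact Or.inl ⟨e1.trans h1, e2.trans h2⟩
    · exact Or.inr ⟨e1.trans h1, e2.trans h2⟩
  have mkK' : ∀ x y u v : ℝ, 0 < x → 0 < y → 0 < u → 0 < v → v ≤ y →
      x * y = c * d + c * f + e * f → u * v = a * b → IsKissingConfig α x y u v := by
    intro x y u v hx hy hu hv hvy e1 e2
    refine ⟨hx, hy, hu, hv, hvy, ?_⟩
    rcases harea with ⟨h1, h2⟩ | ⟨h1, h2⟩
    · exact Or.inr ⟨e1.trans h2, e2.trans h1⟩
    · exact Or.inl ⟨e1.trans h2, e2.trans h1⟩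
  by_cases hf0 : f = 0
  · -- f = 0 : already kissing
    subst hf0
    have hcd : 0 < c * d := by nlinarith
    have hc0 : 0 < c := by
      rcases hc.lt_or_eq with h' | h'
      · exact h'
      · exfalso; nlinarith
    have hd0 : 0 < d := by
      rcases hd.lt_or_eq with h' | h'
      · exact h'
      · exfalso; nlinarith
    exact Or.inl ⟨a, b, c, d, mkK a b c d ha hb hc0 hd0 hdb rfl (by ring), by linarith⟩
  have hf0' : 0 < f := hf.lt_of_ne (Ne.symm hf0)
  by_cases hcz : c = 0
  · -- c = 0 : rotated kissing
    subst hcz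
    have hef : 0 < e * f := by nlinarith
    have he0 : 0 < e := by
      rcases he.lt_or_eq with h' | h'
      · exact h'
      · exfalso; nlinarith
    exact Or.inl ⟨b, a, f, e, mkK b a f e hb ha hf0' he0 hea (by ring) (by ring), by linarith⟩
  have hc0 : 0 < c := hc.lt_of_ne (Ne.symm hcz)
  by_cases hec : e ≤ c
  · -- trade f for d
    by_cases hdbig : d + (c + e) * f / c ≤ b
    · -- Case A : pure kissing
      have hD0 : 0 < d + (c + e) * f / c := by positivity
      refine Or.inl ⟨a, b, c, d + (c + e) * f / c,
        mkK a b c (d + (c + e) * f / c) ha hb hc0 hD0 hdbig rfl (by field_simp; ring), ?_⟩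
      have h1 : (c + e) * f / c ≤ 2 * f + e := by
        rw [div_le_iff₀ hc0]
        nlinarith
      linarith
    · -- Case B : push d up to b
      push_neg at hdbig
      have hce : 0 < c + e := by linarith
      set F := (c * d + c * f + e * f - c * b) / (c + e) with hFdef
      have hFarea : (c + e) * F = c * d + c * f + e * f - c * b := by
        rw [hFdef, mul_div_cancel₀ _ (ne_of_gt hce)]
      have hnum : 0 < c * d + c * f + e * f - c * b := by
        have h2 := mul_lt_mul_of_pos_right hdbig hc0
        rw [add_mul, div_mul_cancel₀ _ (ne_of_gt hc0)] at h2
        nlinarith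
      have hF0 : 0 < F := div_pos hnum hce
      -- perimeter drop from the first trade : 2F + b ≤ 2f + d
      have hP1 : 2 * F + b ≤ 2 * f + d := by
        have h2 : (2 * F) * (c + e) ≤ (2 * f + d - b) * (c + e) := by
          nlinarith [mul_nonneg (sub_nonneg.2 hdb) (sub_nonneg.2 hec)]
        have h3 := le_of_mul_le_mul_right h2 hce
        linarith
      have hbF0 : 0 < b + F := by linarith
      by_cases hbF : b ≤ F
      · by_cases hcbig : F * (a - e) ≤ c * (b + F)
        · -- Case B1a : embedded
          set C := c - F * (a - e) / (b + F) with hCdef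
          have hC0 : 0 ≤ C := by
            rw [hCdef, sub_nonneg, div_le_iff₀ hbF0]
            linarith
          have hCeq : C * (b + F) = c * (b + F) - F * (a - e) := by
            rw [hCdef, sub_mul, div_mul_cancel₀ _ (ne_of_gt hbF0)]
          have hprod : (a + C) * (b + F) = a * b + (c * d + c * f + e * f) := by
            linear_combination hCeq + hFarea
          have hii : a + 2 * C ≤ 2 * c + e := by
            have h3 : (a - e) * (b + F) ≤ (2 * (c - C)) * (b + F) := by
              have h5 : (c - C) * (b + F) = F * (a - e) := by linear_combination -hCeq
              nlinarith [mul_nonneg (sub_nonneg.2 hea) (sub_nonneg.2 hbF)]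
            have h4 := le_of_mul_le_mul_right h3 hbF0
            linarith
          refine Or.inr ⟨a, b, a + C, b + F,
            ⟨ha, hb, by linarith, by linarith, by linarith, by linarith, ?_, ?_⟩, by linarith⟩
          · rcases harea with ⟨h1, h2⟩ | ⟨h1, h2⟩
            · rw [hprod, h1, h2]
            · rw [hprod, h1, h2]; ring
          · rcases harea with ⟨h1, h2⟩ | ⟨h1, h2⟩
            · exact Or.inr h1
            · exact Or.inl h1
        · -- Case B1b : kissing after c hits 0
          push_neg at hcbig
          set E := e + c * (b + F) / F with hEdef
          have hE0 : 0 < E := by positivity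
          have h5 : F * E = F * e + c * (b + F) := by
            rw [hEdef, mul_add, mul_div_cancel₀ _ (ne_of_gt hF0)]
          have hEa : E ≤ a := by
            have h6 : F * E < F * a := by nlinarith
            exact le_of_lt (lt_of_mul_lt_mul_left h6 hF0.le)
          have harea2 : F * E = c * d + c * f + e * f := by
            linear_combination h5 + hFarea
          have hE2 : E ≤ 2 * c + b + e := by
            have h7 : c * (b + F) / F ≤ 2 * c + b := by
              rw [div_le_iff₀ hF0]
              nlinarith [mul_le_mul_of_nonneg_left hbF hc]
            rw [hEdef]; linarith
          exact Or.inl ⟨b, a, F, E, mkK b a F E hb ha hF0 hE0 hEa (by ring) harea2,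
            by linarith⟩
      · -- Case B2 : kissing with the tall rectangle
        push_neg at hbF
        set C := c + e * F / (b + F) with hCdef
        have hC0 : 0 < C := by positivity
        have h8 : C * (b + F) = c * (b + F) + e * F := by
          rw [hCdef, add_mul, div_mul_cancel₀ _ (ne_of_gt hbF0)]
        have harea2 : C * (b + F) = c * d + c * f + e * f := by
          linear_combination h8 + hFarea
        have hC2 : 2 * C ≤ 2 * c + e := by
          have h9 : (2 * (C - c)) * (b + F) ≤ e * (b + F) := by
            have h10 : (C - c) * (b + F) = e * F := by linear_combination h8
            nlinarith [mul_le_mul_of_nonneg_left hbF.le he]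
          have h11 := le_of_mul_le_mul_right h9 hbF0
          linarith
        exact Or.inl ⟨C, b + F, a, b,
          mkK' C (b + F) a b hC0 hbF0 ha hb (by linarith) harea2 rfl, by linarith⟩
  · -- Case C : e > c, trade d away
    push_neg at hec
    have hce : 0 < c + e := by linarith
    set F := f + c * d / (c + e) with hFdef
    have hF0 : 0 < F := by positivity
    have hFarea : (c + e) * F = c * d + c * f + e * f := by
      rw [hFdef, mul_add, mul_div_cancel₀ _ (ne_of_gt hce)]
      ring
    have hP2 : 2 * F ≤ 2 * f + d := by
      have h7 : c * d / (c + e) ≤ d / 2 := by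
        rw [div_le_div_iff₀ hce (by norm_num : (0:ℝ) < 2)]
        nlinarith [mul_le_mul_of_nonneg_right hec.le hd]
      rw [hFdef]; linarith
    by_cases hca : c + e ≤ a
    · -- Case C1
      have hec0 : 0 < e + c := by linarith
      have harea2 : F * (e + c) = c * d + c * f + e * f := by
        linear_combination hFarea
      exact Or.inl ⟨b, a, F, e + c, mkK b a F (e + c) hb ha hF0 hec0 (by linarith) (by ring) harea2,
        by linarith⟩
    · -- Case C2
      push_neg at hca
      have harea2 : F * (c + e) = c * d + c * f + e * f := by
        linear_combination hFarea
      exact Or.inl ⟨F, c + e, b, a,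
        mkK' F (c + e) b a hF0 hce hb ha hca.le harea2 (by ring), by linarith⟩

/-- **Lemma 3.3.** For `0 < α ≤ 1` the infimum of the double bubble perimeter over all
general configurations is the minimum of the kissing-rectangles infimum and the
embedded-rectangle infimum. -/
theorem general_case_min_eq_min_special (α : ℝ) (h0 : 0 < α) (h1 : α ≤ 1) :
    sInf {p : ℝ | ∃ a b c d e f : ℝ, IsGeneralConfig α a b c d e f ∧
        p = 2 * (a + b + c + f) + (d + e)} =
      min
        (sInf {p : ℝ | ∃ a b c d : ℝ, IsKissingConfig α a b c d ∧
          p = 2 * (a + b + c) + d})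
        (sInf {p : ℝ | ∃ a b c d : ℝ, IsEmbeddedConfig α a b c d ∧
          p = a + b + 2 * (c + d)}) := by
  have bddG : BddBelow {p : ℝ | ∃ a b c d e f : ℝ, IsGeneralConfig α a b c d e f ∧
      p = 2 * (a + b + c + f) + (d + e)} := by
    refine ⟨0, ?_⟩
    rintro p ⟨a, b, c, d, e, f, ⟨ha, hb, hc, hd, he, hf, -, -, -⟩, rfl⟩
    linarith
  have bddK : BddBelow {p : ℝ | ∃ a b c d : ℝ, IsKissingConfig α a b c d ∧
      p = 2 * (a + b + c) + d} := by
    refine ⟨0, ?_⟩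
    rintro p ⟨a, b, c, d, ⟨ha, hb, hc, hd, -, -⟩, rfl⟩
    linarith
  have bddE : BddBelow {p : ℝ | ∃ a b c d : ℝ, IsEmbeddedConfig α a b c d ∧
      p = a + b + 2 * (c + d)} := by
    refine ⟨0, ?_⟩
    rintro p ⟨a, b, c, d, ⟨ha, hb, hc, hd, -, -, -, -⟩, rfl⟩
    linarith
  have neK : Set.Nonempty {p : ℝ | ∃ a b c d : ℝ, IsKissingConfig α a b c d ∧
      p = 2 * (a + b + c) + d} :=
    ⟨2 * (1 + 1 + α) + 1, 1, 1, α, 1,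
      ⟨one_pos, one_pos, h0, one_pos, le_refl 1, Or.inl ⟨by ring, by ring⟩⟩, rfl⟩
  have neE : Set.Nonempty {p : ℝ | ∃ a b c d : ℝ, IsEmbeddedConfig α a b c d ∧
      p = a + b + 2 * (c + d)} :=
    ⟨α + 1 + 2 * ((1 + α) + 1), α, 1, 1 + α, 1,
      ⟨h0, one_pos, by linarith, one_pos, by linarith, le_refl 1, by ring,
        Or.inl (by ring)⟩, rfl⟩
  have neG : Set.Nonempty {p : ℝ | ∃ a b c d e f : ℝ, IsGeneralConfig α a b c d e f ∧
      p = 2 * (a + b + c + f) + (d + e)} :=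
    ⟨2 * (1 + 1 + α + 0) + (1 + 0), 1, 1, α, 1, 0, 0,
      ⟨one_pos, one_pos, h0.le, zero_le_one, le_refl 0, le_refl 0, le_refl 1, zero_le_one,
        Or.inl ⟨by ring, by ring⟩⟩, rfl⟩
  apply le_antisymm
  · apply le_min
    · apply csInf_le_csInf bddG neK
      rintro p ⟨a, b, c, d, ⟨ha, hb, hc, hd, hdb, har⟩, rfl⟩
      refine ⟨a, b, c, d, 0, 0,
        ⟨ha, hb, hc.le, hd.le, le_refl 0, le_refl 0, hdb, ha.le, ?_⟩, by ring⟩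
      rcases har with ⟨h1, h2⟩ | ⟨h1, h2⟩
      · exact Or.inl ⟨h1, by linear_combination h2⟩
      · exact Or.inr ⟨h1, by linear_combination h2⟩
    · apply csInf_le_csInf bddG neE
      rintro p ⟨a, b, c, d, ⟨ha, hb, hc, hd, hac, hbd, hcd, har⟩, rfl⟩
      refine ⟨a, b, c - a, b, a, d - b,
        ⟨ha, hb, by linarith, hb.le, ha.le, by linarith, le_refl b, le_refl a, ?_⟩, by ring⟩
      rcases har with h2 | h2
      · exact Or.inr ⟨h2, by linear_combination hcd - h2⟩
      · exact Or.inl ⟨h2, by linear_combination hcd - h2⟩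
  · apply le_csInf neG
    rintro p ⟨a, b, c, d, e, f, hg, rfl⟩
    rcases general_reduction α a b c d e f h0 hg with
      ⟨a', b', c', d', hk, hle⟩ | ⟨a', b', c', d', hem, hle⟩
    · exact le_trans (min_le_left _ _)
        (le_trans (csInf_le bddK ⟨a', b', c', d', hk, rfl⟩) hle)
    · exact le_trans (min_le_right _ _)
        (le_trans (csInf_le bddE ⟨a', b', c', d', hem, rfl⟩) hle)
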